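/- Product inequality: let f_1,...,f_r : X → Y and g_1,...,g_r : X̃ → Ỹ be fibrewise maps over B, and suppose the fibred product X ×_B X̃ is a normal space. Then D_B(f_1 ×_B g_1,...,f_r ×_B g_r) ≤ D_B(f_1,...,f_r) + D_B(g_1,...,g_r). -/

import Mathlib

open Set

/-- Two continuous maps are fibrewise homotopic over `B`: there is a homotopy
whose every time-slice commutes with the projections to `B`. -/
def FibHomotopic {B X Y : Type*} [TopologicalSpace B] [TopologicalSpace X] [TopologicalSpace Y]
    (pX : X → B) (pY : Y → B) (f g : C(X, Y)) : Prop :=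
  ∃ H : f.Homotopy g, ∀ (x : X) (t : unitInterval), pY (H (t, x)) = pX x

/-- Sequential parametrized homotopic distance of a family of fibrewise maps:
the least `n` such that `X` admits an open cover by `n + 1` open sets on each of
which all the maps are pairwise fibrewise homotopic (`∞` if none exists). -/
noncomputable def fibDist {B X Y ι : Type*} [TopologicalSpace B] [TopologicalSpace X]
    [TopologicalSpace Y] (pX : X → B) (pY : Y → B) (f : ι → C(X, Y)) : ℕ∞ :=
  sInf {n : ℕ∞ | ∃ k : ℕ, (k : ℕ∞) = n ∧ ∃ U : Fin (k + 1) → Set X,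
    (∀ i, IsOpen (U i)) ∧ (⋃ i, U i) = Set.univ ∧
    ∀ i s t, FibHomotopic (fun x : U i => pX (x : X)) pY
      ((f s).restrict (U i)) ((f t).restrict (U i))}

/-- The fibred product of two fibrewise spaces over `B`. -/
abbrev FibProd {B X X' : Type*} [TopologicalSpace B] [TopologicalSpace X] [TopologicalSpace X']
    (pX : X → B) (pX' : X' → B) : Type _ := {z : X × X' // pX z.1 = pX' z.2}

/-- The fibrewise product `f ×_B g` of two fibrewise maps. -/
def fibProdMap {B X X' Y Y' : Type*} [TopologicalSpace B] [TopologicalSpace X]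
    [TopologicalSpace X'] [TopologicalSpace Y] [TopologicalSpace Y']
    {pX : X → B} {pX' : X' → B} {pY : Y → B} {pY' : Y' → B}
    (f : C(X, Y)) (g : C(X', Y')) (hf : ∀ x, pY (f x) = pX x) (hg : ∀ x, pY' (g x) = pX' x) :
    C(FibProd pX pX', FibProd pY pY') :=
  ⟨fun z => ⟨(f z.1.1, g z.1.2), by rw [hf, hg, z.2]⟩, by
    apply Continuous.subtype_mk
    exact ((f.continuous.comp continuous_fst).prodMk
      (g.continuous.comp continuous_snd)).comp continuous_subtype_val⟩


section Aux

/-- Glue fibrewise homotopies defined on pairwise disjoint open sets. -/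
theorem fibGlueAux {B Z Y : Type*} [TopologicalSpace B] [TopologicalSpace Z] [TopologicalSpace Y]
    (pZ : Z → B) (pY : Y → B) (F G : C(Z, Y))
    {ι : Type*} (P : ι → Set Z) (hop : ∀ e, IsOpen (P e))
    (hdisj : ∀ e e', e ≠ e' → Disjoint (P e) (P e'))
    (hfib : ∀ e, ∃ H : ((F.restrict (P e)).Homotopy (G.restrict (P e))),
      ∀ (x : P e) (t : unitInterval), pY (H (t, x)) = pZ x) :
    ∃ H : ((F.restrict (⋃ e, P e)).Homotopy (G.restrict (⋃ e, P e))),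
      ∀ (x : (⋃ e, P e)) (t : unitInterval), pY (H (t, x)) = pZ x := by
  classical
  choose H hfH using hfib
  have hmem : ∀ z : (⋃ e, P e : Set Z), ∃ e, (z : Z) ∈ P e := fun z => mem_iUnion.1 z.2
  choose idx hidx using hmem
  set Φ : unitInterval × (⋃ e, P e : Set Z) → Y :=
    fun w => H (idx w.2) (w.1, ⟨(w.2 : Z), hidx w.2⟩) with hΦ
  have key : ∀ (e : ι) (t : unitInterval) (z : (⋃ e, P e : Set Z)) (he : (z : Z) ∈ P e),
      Φ (t, z) = H e (t, ⟨(z : Z), he⟩) := by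
    intro e t z he
    have h1 : idx z = e := by
      by_contra hne
      exact Set.disjoint_left.1 (hdisj _ _ hne) (hidx z) he
    subst h1
    rfl
  have hcont : Continuous Φ := by
    rw [continuous_iff_continuousAt]
    intro w
    have hO : IsOpen {u : unitInterval × (⋃ e, P e : Set Z) | (u.2 : Z) ∈ P (idx w.2)} :=
      (hop _).preimage (continuous_subtype_val.comp continuous_snd)
    refine ContinuousOn.continuousAt ?_ (hO.mem_nhds (hidx w.2))
    rw [continuousOn_iff_continuous_restrict]
    have hc : Continuous fun u : {u : unitInterval × (⋃ e, P e : Set Z) //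
        (u.2 : Z) ∈ P (idx w.2)} => H (idx w.2) (u.1.1, ⟨(u.1.2 : Z), u.2⟩) :=
      (H _).continuous.comp ((continuous_fst.comp continuous_subtype_val).prodMk
        (Continuous.subtype_mk
          (continuous_subtype_val.comp (continuous_snd.comp continuous_subtype_val)) _))
    exact hc.congr fun u => (key (idx w.2) u.1.1 u.1.2 u.2).symm
  refine ⟨⟨⟨Φ, hcont⟩, fun z => ?_, fun z => ?_⟩, fun z t => ?_⟩
  · exact (key (idx z) 0 z (hidx z)).trans ((H (idx z)).apply_zero _)
  · exact (key (idx z) 1 z (hidx z)).trans ((H (idx z)).apply_one _)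
  · exact (congrArg pY (key (idx z) t z (hidx z))).trans (hfH (idx z) _ t)

end Aux

section Piece

variable {B X X' Y Y' : Type*} [TopologicalSpace B] [TopologicalSpace X]
    [TopologicalSpace X'] [TopologicalSpace Y] [TopologicalSpace Y']
    {pX : X → B} {pX' : X' → B} {pY : Y → B} {pY' : Y' → B}

theorem fibPieceAux (fs ft : C(X, Y)) (gs gt : C(X', Y'))
    (hfs : ∀ x, pY (fs x) = pX x) (hft : ∀ x, pY (ft x) = pX x)
    (hgs : ∀ x, pY' (gs x) = pX' x) (hgt : ∀ x, pY' (gt x) = pX' x)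
    (A : Set X) (Bs : Set X') (Wp : Set {z : X × X' // pX z.1 = pX' z.2})
    (hW1 : ∀ z ∈ Wp, (z : X × X').1 ∈ A) (hW2 : ∀ z ∈ Wp, (z : X × X').2 ∈ Bs)
    (H : (fs.restrict A).Homotopy (ft.restrict A))
    (hH : ∀ (x : A) (t : unitInterval), pY (H (t, x)) = pX x)
    (K : (gs.restrict Bs).Homotopy (gt.restrict Bs))
    (hK : ∀ (x : Bs) (t : unitInterval), pY' (K (t, x)) = pX' x)
    (Fs Ft : C({z : X × X' // pX z.1 = pX' z.2}, {w : Y × Y' // pY w.1 = pY' w.2}))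
    (hFs : ∀ z, (Fs z : Y × Y') = (fs (z : X × X').1, gs (z : X × X').2))
    (hFt : ∀ z, (Ft z : Y × Y') = (ft (z : X × X').1, gt (z : X × X').2)) :
    ∃ L : ((Fs.restrict Wp).Homotopy (Ft.restrict Wp)),
      ∀ (x : Wp) (t : unitInterval), pY ((L (t, x)) : Y × Y').1 = pX (x : X × X').1 := by
  classical
  have hcompat : ∀ (t : unitInterval) (z : Wp),
      pY (H (t, ⟨(z : X × X').1, hW1 _ z.2⟩)) = pY' (K (t, ⟨(z : X × X').2, hW2 _ z.2⟩)) := by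
    intro t z
    rw [hH, hK]
    exact (z : {z : X × X' // pX z.1 = pX' z.2}).2
  have hc1 : Continuous fun w : unitInterval × Wp =>
      ((w.1, ⟨(w.2 : X × X').1, hW1 _ w.2.2⟩) : unitInterval × A) :=
    continuous_fst.prodMk (Continuous.subtype_mk
      (continuous_fst.comp (continuous_subtype_val.comp
        (continuous_subtype_val.comp continuous_snd))) _)
  have hc2 : Continuous fun w : unitInterval × Wp =>
      ((w.1, ⟨(w.2 : X × X').2, hW2 _ w.2.2⟩) : unitInterval × Bs) :=
    continuous_fst.prodMk (Continuous.subtype_mk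
      (continuous_snd.comp (continuous_subtype_val.comp
        (continuous_subtype_val.comp continuous_snd))) _)
  refine ⟨⟨⟨fun w => ⟨(H (w.1, ⟨(w.2 : X × X').1, hW1 _ w.2.2⟩),
      K (w.1, ⟨(w.2 : X × X').2, hW2 _ w.2.2⟩)), hcompat w.1 w.2⟩,
      Continuous.subtype_mk ((H.continuous.comp hc1).prodMk (K.continuous.comp hc2)) _⟩,
      fun z => ?_, fun z => ?_⟩, fun z t => ?_⟩
  · exact Subtype.ext ((Prod.ext (H.apply_zero _) (K.apply_zero _)).trans (hFs _).symm)
  · exact Subtype.ext ((Prod.ext (H.apply_one _) (K.apply_one _)).trans (hFt _).symm)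
  · exact hH _ t

end Piece

/-- The Farber-style combinatorial refinement of two finite open covers of a
normal space into `k+l+1` groups of pairwise disjoint open sets. -/
theorem fibCoverAux {Z : Type*} [TopologicalSpace Z] [NormalSpace Z] {k l : ℕ}
    (A : Fin (k+1) → Set Z) (Bs : Fin (l+1) → Set Z)
    (hA : ∀ i, IsOpen (A i)) (hB : ∀ j, IsOpen (Bs j))
    (hAc : (⋃ i, A i) = univ) (hBc : (⋃ j, Bs j) = univ) :
    ∃ W : Finset (Fin (k+1)) → Finset (Fin (l+1)) → Set Z,
      (∀ S T, IsOpen (W S T)) ∧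
      (∀ z : Z, ∃ S T, S.Nonempty ∧ T.Nonempty ∧ z ∈ W S T) ∧
      (∀ S T S' T', S.Nonempty → T.Nonempty → S'.Nonempty → T'.Nonempty →
        S.card + T.card = S'.card + T'.card → (S, T) ≠ (S', T') →
        Disjoint (W S T) (W S' T')) ∧
      (∀ S T i j, i ∈ S → j ∈ T → W S T ⊆ A i ∩ Bs j) := by
  classical
  obtain ⟨φ, hφ⟩ := BumpCovering.exists_isSubordinate_of_locallyFinite isClosed_univ A hA
    (locallyFinite_of_finite A) (by rw [hAc])
  obtain ⟨ψ, hψ⟩ := BumpCovering.exists_isSubordinate_of_locallyFinite isClosed_univ Bs hB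
    (locallyFinite_of_finite Bs) (by rw [hBc])
  refine ⟨fun S T => {z | ∀ i ∈ S, ∀ j ∈ T, 0 < φ i z * ψ j z ∧
      ∀ p q, (p ∉ S ∨ q ∉ T) → φ p z * ψ q z < φ i z * ψ j z}, ?_, ?_, ?_, ?_⟩
  · -- openness
    intro S T
    show IsOpen {z | ∀ i ∈ S, ∀ j ∈ T, 0 < φ i z * ψ j z ∧
      ∀ p q, (p ∉ S ∨ q ∉ T) → φ p z * ψ q z < φ i z * ψ j z}
    have heq : {z | ∀ i ∈ S, ∀ j ∈ T, 0 < φ i z * ψ j z ∧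
        ∀ p q, (p ∉ S ∨ q ∉ T) → φ p z * ψ q z < φ i z * ψ j z} =
        ⋂ i ∈ S, ⋂ j ∈ T, ({z | 0 < φ i z * ψ j z} ∩
          ⋂ (p : Fin (k+1)) (q : Fin (l+1)),
            {z | (p ∉ S ∨ q ∉ T) → φ p z * ψ q z < φ i z * ψ j z}) := by
      ext z
      simp only [mem_setOf_eq, mem_iInter, mem_inter_iff]
      try tauto
    rw [heq]
    refine isOpen_biInter_finset fun i _ => isOpen_biInter_finset fun j _ => ?_
    refine IsOpen.inter (isOpen_lt continuous_const ((φ i).continuous.mul (ψ j).continuous)) ?_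
    refine isOpen_iInter_of_finite fun p => isOpen_iInter_of_finite fun q => ?_
    by_cases hc : p ∉ S ∨ q ∉ T
    · convert isOpen_lt ((φ p).continuous.mul (ψ q).continuous)
        ((φ i).continuous.mul (ψ j).continuous) using 1
      ext z; simp [hc]
    · convert isOpen_univ using 1
      ext z; simp [hc]
  · -- covering
    intro z
    obtain ⟨i₀, hi₀⟩ := φ.eventuallyEq_one' z (mem_univ z)
    obtain ⟨j₀, hj₀⟩ := ψ.eventuallyEq_one' z (mem_univ z)
    have hφ1 : φ i₀ z = 1 := by simpa using hi₀.eq_of_nhds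
    have hψ1 : ψ j₀ z = 1 := by simpa using hj₀.eq_of_nhds
    obtain ⟨iM, -, hiM⟩ := Finset.exists_max_image Finset.univ (fun i => φ i z)
      ⟨i₀, Finset.mem_univ _⟩
    obtain ⟨jM, -, hjM⟩ := Finset.exists_max_image Finset.univ (fun j => ψ j z)
      ⟨j₀, Finset.mem_univ _⟩
    have hSmem : ∀ i, i ∈ Finset.univ.filter (fun i => ∀ i', φ i' z ≤ φ i z) ↔
        ∀ i', φ i' z ≤ φ i z := by
      intro i
      simp only [Finset.mem_filter, Finset.mem_univ, true_and]
    have hTmem : ∀ j, j ∈ Finset.univ.filter (fun j => ∀ j', ψ j' z ≤ ψ j z) ↔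
        ∀ j', ψ j' z ≤ ψ j z := by
      intro j
      simp only [Finset.mem_filter, Finset.mem_univ, true_and]
    refine ⟨Finset.univ.filter (fun i => ∀ i', φ i' z ≤ φ i z),
      Finset.univ.filter (fun j => ∀ j', ψ j' z ≤ ψ j z),
      ⟨iM, (hSmem iM).2 fun i' => hiM i' (Finset.mem_univ _)⟩,
      ⟨jM, (hTmem jM).2 fun j' => hjM j' (Finset.mem_univ _)⟩, ?_⟩
    intro i hi j hj
    rw [hSmem] at hi
    rw [hTmem] at hj
    have hφpos : 0 < φ i z := lt_of_lt_of_le one_pos (hφ1 ▸ hi i₀)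
    have hψpos : 0 < ψ j z := lt_of_lt_of_le one_pos (hψ1 ▸ hj j₀)
    refine ⟨mul_pos hφpos hψpos, ?_⟩
    intro p q hpq
    rcases hpq with hp | hq
    · rw [hSmem] at hp
      push_neg at hp
      obtain ⟨i', hi'⟩ := hp
      have h1 : φ p z < φ i z := lt_of_lt_of_le hi' (hi i')
      calc φ p z * ψ q z ≤ φ p z * ψ j z :=
            mul_le_mul_of_nonneg_left (hj q) (φ.nonneg p z)
        _ < φ i z * ψ j z := mul_lt_mul_of_pos_right h1 hψpos
    · rw [hTmem] at hq
      push_neg at hq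
      obtain ⟨j', hj'⟩ := hq
      have h1 : ψ q z < ψ j z := lt_of_lt_of_le hj' (hj j')
      calc φ p z * ψ q z ≤ φ i z * ψ q z :=
            mul_le_mul_of_nonneg_right (hi p) (ψ.nonneg q z)
        _ < φ i z * ψ j z := mul_lt_mul_of_pos_left h1 hφpos
  · -- disjointness
    intro S T S' T' hS hT hS' hT' hcard hne
    rw [Set.disjoint_left]
    rintro z hz hz'
    have hwit : ∀ {S S' : Finset (Fin (k+1))} {T T' : Finset (Fin (l+1))} (_ : S.Nonempty) (_ : T.Nonempty),
        S.card + T.card = S'.card + T'.card → (S, T) ≠ (S', T') →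
        ∃ i ∈ S, ∃ j ∈ T, i ∉ S' ∨ j ∉ T' := by
      intro S S' T T' hS hT hcard hne
      have hns : ¬(S ⊆ S' ∧ T ⊆ T') := by
        rintro ⟨h1, h2⟩
        have e1 := Finset.eq_of_subset_of_card_le h1
          (by have := Finset.card_le_card h1; have := Finset.card_le_card h2; omega)
        have e2 := Finset.eq_of_subset_of_card_le h2
          (by have := Finset.card_le_card h1; have := Finset.card_le_card h2; omega)
        exact hne (by rw [e1, e2])
      rw [not_and_or] at hns
      rcases hns with h | h
      · obtain ⟨i, hiS, hiS'⟩ := Finset.not_subset.1 h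
        obtain ⟨j, hj⟩ := hT
        exact ⟨i, hiS, j, hj, Or.inl hiS'⟩
      · obtain ⟨j, hjT, hjT'⟩ := Finset.not_subset.1 h
        obtain ⟨i, hi⟩ := hS
        exact ⟨i, hi, j, hjT, Or.inr hjT'⟩
    obtain ⟨i, hiS, j, hjT, hout⟩ := hwit hS hT hcard hne
    obtain ⟨i', hiS', j', hjT', hout'⟩ := hwit hS' hT' hcard.symm (Ne.symm hne)
    have h1 := (hz i hiS j hjT).2 i' j' hout'
    have h2 := (hz' i' hiS' j' hjT').2 i j hout
    linarith
  · -- subset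
    intro S T i j hi hj z hz
    have h0 := (hz i hi j hj).1
    have hφpos : 0 < φ i z := by
      by_contra h
      push_neg at h
      nlinarith [ψ.nonneg j z]
    have hψpos : 0 < ψ j z := by
      by_contra h
      push_neg at h
      nlinarith [φ.nonneg i z]
    exact ⟨hφ i (subset_tsupport _ (Function.mem_support.2 (ne_of_gt hφpos))),
      hψ j (subset_tsupport _ (Function.mem_support.2 (ne_of_gt hψpos)))⟩


theorem fibDist_spec {B X Y ι : Type*} [TopologicalSpace B] [TopologicalSpace X]
    [TopologicalSpace Y] (pX : X → B) (pY : Y → B) (f : ι → C(X, Y))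
    (h : fibDist pX pY f ≠ ⊤) :
    ∃ k : ℕ, (k : ℕ∞) = fibDist pX pY f ∧ ∃ U : Fin (k + 1) → Set X,
      (∀ i, IsOpen (U i)) ∧ (⋃ i, U i) = Set.univ ∧
      ∀ i s t, FibHomotopic (fun x : U i => pX (x : X)) pY
        ((f s).restrict (U i)) ((f t).restrict (U i)) := by
  have hne : {n : ℕ∞ | ∃ k : ℕ, (k : ℕ∞) = n ∧ ∃ U : Fin (k + 1) → Set X,
      (∀ i, IsOpen (U i)) ∧ (⋃ i, U i) = Set.univ ∧
      ∀ i s t, FibHomotopic (fun x : U i => pX (x : X)) pY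
        ((f s).restrict (U i)) ((f t).restrict (U i))}.Nonempty := by
    rw [Set.nonempty_iff_ne_empty]
    intro hemp
    apply h
    unfold fibDist
    rw [hemp, sInf_empty]
  exact csInf_mem hne

theorem stmt13 {B X X' Y Y' : Type*} [TopologicalSpace B] [TopologicalSpace X]
    [TopologicalSpace X'] [TopologicalSpace Y] [TopologicalSpace Y']
    (pX : X → B) (pX' : X' → B) (pY : Y → B) (pY' : Y' → B)
    (hpX : Continuous pX) (hpX' : Continuous pX') (hpY : Continuous pY) (hpY' : Continuous pY')
    [NormalSpace (FibProd pX pX')]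
    (r : ℕ) (f : Fin r → C(X, Y)) (hf : ∀ i x, pY (f i x) = pX x)
    (g : Fin r → C(X', Y')) (hg : ∀ i x, pY' (g i x) = pX' x) :
    fibDist (fun z : FibProd pX pX' => pX z.1.1) (fun w : FibProd pY pY' => pY w.1.1)
      (fun i => fibProdMap (f i) (g i) (hf i) (hg i)) ≤
      fibDist pX pY f + fibDist pX' pY' g := by
  classical
  rcases eq_or_ne (fibDist pX pY f) ⊤ with h | ha
  · rw [h, top_add]
    exact le_top
  rcases eq_or_ne (fibDist pX' pY' g) ⊤ with h | hb
  · rw [h, add_top]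
    exact le_top
  obtain ⟨k, hk, U, hUo, hUc, hUhom⟩ := fibDist_spec pX pY f ha
  obtain ⟨l, hl, V, hVo, hVc, hVhom⟩ := fibDist_spec pX' pY' g hb
  -- pull the covers back to the fibred product
  set Z := FibProd pX pX'
  have hAo : ∀ i, IsOpen {z : Z | z.1.1 ∈ U i} :=
    fun i => (hUo i).preimage (continuous_fst.comp continuous_subtype_val)
  have hBo : ∀ j, IsOpen {z : Z | z.1.2 ∈ V j} :=
    fun j => (hVo j).preimage (continuous_snd.comp continuous_subtype_val)
  have hAc : (⋃ i, {z : Z | z.1.1 ∈ U i}) = univ := by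
    rw [eq_univ_iff_forall]
    intro z
    have : z.1.1 ∈ ⋃ i, U i := by rw [hUc]; exact mem_univ _
    obtain ⟨i, hi⟩ := mem_iUnion.1 this
    exact mem_iUnion.2 ⟨i, hi⟩
  have hBc : (⋃ j, {z : Z | z.1.2 ∈ V j}) = univ := by
    rw [eq_univ_iff_forall]
    intro z
    have : z.1.2 ∈ ⋃ j, V j := by rw [hVc]; exact mem_univ _
    obtain ⟨j, hj⟩ := mem_iUnion.1 this
    exact mem_iUnion.2 ⟨j, hj⟩
  obtain ⟨W, hWo, hWcov, hWdisj, hWsub⟩ :=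
    fibCoverAux (fun i => {z : Z | z.1.1 ∈ U i}) (fun j => {z : Z | z.1.2 ∈ V j})
      hAo hBo hAc hBc
  -- the combined cover
  have hmain : fibDist (fun z : FibProd pX pX' => pX z.1.1)
      (fun w : FibProd pY pY' => pY w.1.1)
      (fun i => fibProdMap (f i) (g i) (hf i) (hg i)) ≤ ((k + l : ℕ) : ℕ∞) := by
    apply sInf_le
    refine ⟨k + l, rfl,
      fun c => ⋃ e : {e : Finset (Fin (k+1)) × Finset (Fin (l+1)) //
        e.1.Nonempty ∧ e.2.Nonempty ∧ e.1.card + e.2.card = (c : ℕ) + 2},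
        W e.1.1 e.1.2, ?_, ?_, ?_⟩
    · intro c
      exact isOpen_iUnion fun e => hWo _ _
    · rw [eq_univ_iff_forall]
      intro z
      obtain ⟨S, T, hS, hT, hz⟩ := hWcov z
      have h2 : 2 ≤ S.card + T.card := by
        have := hS.card_pos
        have := hT.card_pos
        omega
      have hk1 : S.card ≤ k + 1 := by
        have := Finset.card_le_univ S
        simpa using this
      have hl1 : T.card ≤ l + 1 := by
        have := Finset.card_le_univ T
        simpa using this
      refine mem_iUnion.2 ⟨⟨S.card + T.card - 2, by omega⟩, ?_⟩
      exact mem_iUnion.2 ⟨⟨(S, T), hS, hT, by simp; omega⟩, hz⟩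
    · intro c s t
      apply fibGlueAux (fun z : Z => pX z.1.1) (fun w : FibProd pY pY' => pY w.1.1)
      · intro e
        exact hWo _ _
      · intro e e' hne
        refine hWdisj _ _ _ _ e.2.1 e.2.2.1 e'.2.1 e'.2.2.1 ?_ ?_
        · rw [e.2.2.2, e'.2.2.2]
        · intro h
          exact hne (Subtype.ext h)
      · intro e
        obtain ⟨i₀, hi₀⟩ := e.2.1
        obtain ⟨j₀, hj₀⟩ := e.2.2.1
        exact fibPieceAux (f s) (f t) (g s) (g t) (hf s) (hf t) (hg s) (hg t)
          (U i₀) (V j₀) (W e.1.1 e.1.2)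
          (fun z hz => ((hWsub e.1.1 e.1.2 i₀ j₀ hi₀ hj₀) hz).1)
          (fun z hz => ((hWsub e.1.1 e.1.2 i₀ j₀ hi₀ hj₀) hz).2)
          (hUhom i₀ s t).choose (hUhom i₀ s t).choose_spec
          (hVhom j₀ s t).choose (hVhom j₀ s t).choose_spec
          (fibProdMap (f s) (g s) (hf s) (hg s)) (fibProdMap (f t) (g t) (hf t) (hg t))
          (fun z => rfl) (fun z => rfl)
  refine le_trans hmain ?_
  rw [Nat.cast_add, hk, hl]
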